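/- Lindenbaum lemma for QRC₁: let Σ be a finite signature whose set of constants is C, and let Φ be a finite set of closed formulas in the language of Σ with |C| > 2·cdepth(Φ) + 2·udepth(Φ). If p ⊆ Cl_C(Φ) is a closed consistent pair whose positive part p⁺ is a singleton, then there is a pair q ⊇ p in the language of Σ such that q is Cl_C(Φ)-maximal, consistent, and fully witnessed, and mdepth(q⁺) = mdepth(p⁺). -/

import Mathlib

namespace QRC1

/-- Strictly positive formulas of QRC₁ over a signature with constants `Cst`,
relation symbols `Rl`, and arity function `ar`.  Terms are either variables
(natural numbers, left) or constants (right). -/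
inductive Fml (Cst Rl : Type) (ar : Rl → ℕ) : Type
  | top : Fml Cst Rl ar
  | rel (S : Rl) (ts : Fin (ar S) → ℕ ⊕ Cst) : Fml Cst Rl ar
  | and (φ ψ : Fml Cst Rl ar) : Fml Cst Rl ar
  | dia (φ : Fml Cst Rl ar) : Fml Cst Rl ar
  | all (x : ℕ) (φ : Fml Cst Rl ar) : Fml Cst Rl ar

namespace Fml

variable {Cst Rl : Type} {ar : Rl → ℕ}

/-- Free variables of a formula. -/
def fv : Fml Cst Rl ar → Set ℕ
  | .top => ∅
  | .rel _ ts => {x | ∃ i, ts i = Sum.inl x}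
  | .and φ ψ => fv φ ∪ fv ψ
  | .dia φ => fv φ
  | .all y φ => fv φ \ {y}

/-- A formula is closed when it has no free variables. -/
def Closed (φ : Fml Cst Rl ar) : Prop := φ.fv = ∅

/-- Constants occurring in a formula. -/
def consts : Fml Cst Rl ar → Set Cst
  | .top => ∅
  | .rel _ ts => {c | ∃ i, ts i = Sum.inr c}
  | .and φ ψ => consts φ ∪ consts ψ
  | .dia φ => consts φ
  | .all _ φ => consts φ

/-- Substitution of a term for a variable, on terms. -/
def substT (x : ℕ) (t : ℕ ⊕ Cst) : ℕ ⊕ Cst → ℕ ⊕ Cst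
  | .inl y => if y = x then t else .inl y
  | .inr c => .inr c

/-- `φ.subst x t` replaces all free occurrences of variable `x` in `φ` by the term `t`. -/
def subst : Fml Cst Rl ar → ℕ → (ℕ ⊕ Cst) → Fml Cst Rl ar
  | .top, _, _ => .top
  | .rel S ts, x, t => .rel S (fun i => substT x t (ts i))
  | .and φ ψ, x, t => .and (φ.subst x t) (ψ.subst x t)
  | .dia φ, x, t => .dia (φ.subst x t)
  | .all y φ, x, t => if y = x then .all y φ else .all y (φ.subst x t)

/-- `FreeFor t x φ`: the term `t` is free for the variable `x` in `φ`, i.e. no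
free occurrence of a variable of `t` becomes bound in `φ[x/t]`. -/
def FreeFor (t : ℕ ⊕ Cst) (x : ℕ) : Fml Cst Rl ar → Prop
  | .top => True
  | .rel _ _ => True
  | .and φ ψ => FreeFor t x φ ∧ FreeFor t x ψ
  | .dia φ => FreeFor t x φ
  | .all y φ => x ∉ fv (Fml.all y φ) ∨ (t ≠ .inl y ∧ FreeFor t x φ)

/-- Modal depth. -/
def mdepth : Fml Cst Rl ar → ℕ
  | .top => 0
  | .rel _ _ => 0
  | .and φ ψ => max φ.mdepth ψ.mdepth
  | .dia φ => φ.mdepth + 1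
  | .all _ φ => φ.mdepth

/-- Quantifier depth. -/
def udepth : Fml Cst Rl ar → ℕ
  | .top => 0
  | .rel _ _ => 0
  | .and φ ψ => max φ.udepth ψ.udepth
  | .dia φ => φ.udepth
  | .all _ φ => φ.udepth + 1

/-- Number of distinct constants occurring in a formula. -/
noncomputable def cdepth (φ : Fml Cst Rl ar) : ℕ := φ.consts.ncard

/-- Size of a formula (for termination purposes). -/
def size : Fml Cst Rl ar → ℕ
  | .top => 1
  | .rel _ _ => 1
  | .and φ ψ => φ.size + ψ.size + 1
  | .dia φ => φ.size + 1
  | .all _ φ => φ.size + 1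

theorem size_subst (φ : Fml Cst Rl ar) (x : ℕ) (t : ℕ ⊕ Cst) :
    (φ.subst x t).size = φ.size := by
  induction φ generalizing x t with
  | top => rfl
  | rel S ts => rfl
  | and φ ψ ihφ ihψ => simp [subst, size, ihφ, ihψ]
  | dia φ ih => simp [subst, size, ih]
  | all y φ ih => by_cases h : y = x <;> simp [subst, h, size, ih]

/-- The closure of a formula under a set of constants `C`, where the
subformulas of `∀x φ` are all `φ[x/c]` for `c ∈ C`. -/
def cl (C : Set Cst) : Fml Cst Rl ar → Set (Fml Cst Rl ar)
  | .top => {.top}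
  | .rel S ts => {.rel S ts, .top}
  | .and φ ψ => {.and φ ψ} ∪ φ.cl C ∪ ψ.cl C
  | .dia φ => {.dia φ} ∪ φ.cl C
  | .all x φ => {.all x φ} ∪ ⋃ c ∈ C, (φ.subst x (.inr c)).cl C
termination_by φ => φ.size
decreasing_by all_goals (simp [size, size_subst]; try omega)

/-- Renaming of constants along a map `f` (used for signature extensions). -/
def mapC {Cst' : Type} (f : Cst → Cst') : Fml Cst Rl ar → Fml Cst' Rl ar
  | .top => .top
  | .rel S ts => .rel S (fun i => Sum.map id f (ts i))
  | .and φ ψ => .and (φ.mapC f) (ψ.mapC f)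
  | .dia φ => .dia (φ.mapC f)
  | .all x φ => .all x (φ.mapC f)

/-- Simultaneous substitution of terms for variables. -/
def msubst (σ : ℕ → ℕ ⊕ Cst) : Fml Cst Rl ar → Fml Cst Rl ar
  | .top => .top
  | .rel S ts => .rel S (fun i => match ts i with
      | .inl x => σ x
      | .inr c => .inr c)
  | .and φ ψ => .and (φ.msubst σ) (ψ.msubst σ)
  | .dia φ => .dia (φ.msubst σ)
  | .all x φ => .all x (φ.msubst (Function.update σ x (.inl x)))

/-- `φ^g`: replace every free variable `x` of `φ` by the constant `g x`. -/
def capp (g : ℕ → Cst) (φ : Fml Cst Rl ar) : Fml Cst Rl ar :=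
  φ.msubst (fun x => .inr (g x))

end Fml

/-- The derivability relation `φ ⊢ ψ` of the calculus QRC₁. -/
inductive Der {Cst Rl : Type} {ar : Rl → ℕ} : Fml Cst Rl ar → Fml Cst Rl ar → Prop
  | top (φ) : Der φ .top
  | refl (φ) : Der φ φ
  | andE1 (φ ψ) : Der (.and φ ψ) φ
  | andE2 (φ ψ) : Der (.and φ ψ) ψ
  | andI {φ ψ χ} : Der φ ψ → Der φ χ → Der φ (.and ψ χ)
  | cut {φ ψ χ} : Der φ ψ → Der ψ χ → Der φ χ
  | diaMono {φ ψ} : Der φ ψ → Der (.dia φ) (.dia ψ)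
  | diaTrans (φ) : Der (.dia (.dia φ)) (.dia φ)
  | allI {φ ψ} (x) : Der φ ψ → x ∉ φ.fv → Der φ (.all x ψ)
  | allE {φ ψ} (x) (t : ℕ ⊕ Cst) : Der (φ.subst x t) ψ → Fml.FreeFor t x φ →
      Der (.all x φ) ψ
  | inst {φ ψ} (x) (t : ℕ ⊕ Cst) : Der φ ψ → Fml.FreeFor t x φ → Fml.FreeFor t x ψ →
      Der (φ.subst x t) (ψ.subst x t)
  | genC {φ ψ} (x) (c : Cst) : Der (φ.subst x (.inr c)) (ψ.subst x (.inr c)) →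
      c ∉ φ.consts → c ∉ ψ.consts → Der φ ψ

section Depths

variable {Cst Rl : Type} {ar : Rl → ℕ}

/-- Modal depth of a set of formulas (the supremum of the modal depths). -/
noncomputable def mdepthSet (Γ : Set (Fml Cst Rl ar)) : ℕ := sSup (Fml.mdepth '' Γ)

/-- Quantifier depth of a set of formulas. -/
noncomputable def udepthSet (Γ : Set (Fml Cst Rl ar)) : ℕ := sSup (Fml.udepth '' Γ)

/-- Maximum number of distinct constants per formula in a set of formulas. -/
noncomputable def cdepthSet (Γ : Set (Fml Cst Rl ar)) : ℕ := sSup (Fml.cdepth '' Γ)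

/-- Closure of a set of formulas under a set of constants. -/
def clSet (C : Set Cst) (Γ : Set (Fml Cst Rl ar)) : Set (Fml Cst Rl ar) :=
  ⋃ γ ∈ Γ, γ.cl C

/-- Conjunction of a finite list of formulas. -/
def conjList : List (Fml Cst Rl ar) → Fml Cst Rl ar
  | [] => .top
  | φ :: L => .and φ (conjList L)

end Depths

/-- A pair `⟨p⁺, p⁻⟩` of sets of formulas. -/
structure Pair (Cst Rl : Type) (ar : Rl → ℕ) where
  pos : Set (Fml Cst Rl ar)
  neg : Set (Fml Cst Rl ar)

namespace Pair

variable {Cst Rl : Type} {ar : Rl → ℕ}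

/-- All formulas of the pair are closed. -/
def ClosedP (p : Pair Cst Rl ar) : Prop := ∀ φ ∈ p.pos ∪ p.neg, φ.Closed

/-- Consistency: the conjunction of (finitely many formulas of) `p⁺` does not
derive any formula of `p⁻`. -/
def Consistent (p : Pair Cst Rl ar) : Prop :=
  ∀ δ ∈ p.neg, ∀ L : List (Fml Cst Rl ar), (∀ χ ∈ L, χ ∈ p.pos) → ¬ Der (conjList L) δ

/-- `Φ`-maximality: every formula of `Φ` is in `p⁺` or in `p⁻`, and `p`
contains only formulas of `Φ`. -/
def MaximalIn (Φ : Set (Fml Cst Rl ar)) (p : Pair Cst Rl ar) : Prop :=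
  (∀ χ ∈ Φ, χ ∈ p.pos ∨ χ ∈ p.neg) ∧ p.pos ∪ p.neg ⊆ Φ

/-- Fully witnessed: every negative universal has a constant witness. -/
def FullyWitnessed (p : Pair Cst Rl ar) : Prop :=
  ∀ (x : ℕ) (φ : Fml Cst Rl ar), Fml.all x φ ∈ p.neg →
    ∃ c : Cst, φ.subst x (.inr c) ∈ p.neg

/-- `Φ`-maximal, consistent, fully witnessed (and closed) pair. -/
def MCW (Φ : Set (Fml Cst Rl ar)) (p : Pair Cst Rl ar) : Prop :=
  p.ClosedP ∧ p.MaximalIn Φ ∧ p.Consistent ∧ p.FullyWitnessed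

end Pair

/-- The relation `R̂` between pairs. -/
def hatR {Cst Rl : Type} {ar : Rl → ℕ} (p q : Pair Cst Rl ar) : Prop :=
  (∀ φ : Fml Cst Rl ar, Fml.dia φ ∈ p.neg → φ ∈ q.neg ∧ Fml.dia φ ∈ q.neg) ∧
  ∃ ψ : Fml Cst Rl ar, Fml.dia ψ ∈ p.pos ∧ Fml.dia ψ ∈ q.neg

/-- A relational model for QRC₁. -/
structure Model (Cst Rl : Type) (ar : Rl → ℕ) where
  W : Type
  R : W → W → Prop
  Dom : W → Type
  finDom : ∀ w, Finite (Dom w)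
  η : ∀ w v, R w v → Dom w → Dom v
  I : ∀ w, Cst → Dom w
  J : ∀ w (S : Rl), Set (Fin (ar S) → Dom w)

namespace Model

variable {Cst Rl : Type} {ar : Rl → ℕ} (M : Model Cst Rl ar)

/-- Value of a term under a `w`-assignment. -/
def tval {w : M.W} (g : ℕ → M.Dom w) : ℕ ⊕ Cst → M.Dom w
  | .inl x => g x
  | .inr c => M.I w c

/-- Kripke satisfaction `M, w ⊩^g φ`. -/
def Sat : (w : M.W) → (g : ℕ → M.Dom w) → Fml Cst Rl ar → Prop
  | _, _, .top => True
  | w, g, .rel S ts => (fun i => M.tval g (ts i)) ∈ M.J w S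
  | w, g, .and φ ψ => Sat w g φ ∧ Sat w g ψ
  | w, g, .dia φ => ∃ (v : M.W) (h : M.R w v), Sat v (fun n => M.η w v h (g n)) φ
  | w, g, .all x φ => ∀ h : ℕ → M.Dom w, (∀ y, y ≠ x → h y = g y) → Sat w h φ

/-- Adequate models: transitive accessibility, transitive `η` functions, and
concordant interpretation of constants. -/
structure Adequate : Prop where
  trans : Transitive M.R
  etaTrans : ∀ {w u v : M.W} (h1 : M.R w u) (h2 : M.R u v) (h3 : M.R w v),
    M.η w v h3 = M.η u v h2 ∘ M.η w u h1
  concord : ∀ {w u : M.W} (h : M.R w u) (c : Cst), M.I u c = M.η w u h (M.I w c)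

/-- Constant domain: all worlds have the same domain. -/
def ConstantDomain : Prop := ∀ w v : M.W, M.Dom w = M.Dom v

end Model



section LindenbaumLemmas

variable {Cst Rl : Type} {ar : Rl → ℕ}

namespace Fml

theorem subst_eq_of_not_fv (φ : Fml Cst Rl ar) (x : ℕ) (t : ℕ ⊕ Cst) (h : x ∉ φ.fv) :
    φ.subst x t = φ := by
  induction φ with
  | top => rfl
  | rel S ts =>
      have : (fun i => substT x t (ts i)) = ts := by
        funext i
        cases hts : ts i with
        | inl y =>
            simp only [substT]
            rw [if_neg]
            rintro rfl
            exact h ⟨i, hts⟩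
        | inr c => rfl
      simp only [subst, this]
  | and φ ψ ihφ ihψ =>
      have h' : x ∉ φ.fv ∧ x ∉ ψ.fv := by
        constructor <;> (intro hx; exact h (by first | exact Or.inl hx | exact Or.inr hx))
      simp only [subst, ihφ h'.1, ihψ h'.2]
  | dia φ ih => simp only [subst, ih h]
  | all y φ ih =>
      by_cases hyx : y = x
      · simp [subst, hyx]
      · simp only [subst, if_neg hyx]
        rw [ih]
        intro hx
        exact h ⟨hx, fun he => hyx ((Set.mem_singleton_iff.mp he).symm)⟩

theorem mdepth_subst (φ : Fml Cst Rl ar) (x : ℕ) (t : ℕ ⊕ Cst) :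
    (φ.subst x t).mdepth = φ.mdepth := by
  induction φ generalizing x t with
  | top => rfl
  | rel S ts => rfl
  | and φ ψ ihφ ihψ => simp [subst, mdepth, ihφ, ihψ]
  | dia φ ih => simp [subst, mdepth, ih]
  | all y φ ih => by_cases h : y = x <;> simp [subst, h, mdepth, ih]

theorem udepth_subst (φ : Fml Cst Rl ar) (x : ℕ) (t : ℕ ⊕ Cst) :
    (φ.subst x t).udepth = φ.udepth := by
  induction φ generalizing x t with
  | top => rfl
  | rel S ts => rfl
  | and φ ψ ihφ ihψ => simp [subst, udepth, ihφ, ihψ]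
  | dia φ ih => simp [subst, udepth, ih]
  | all y φ ih => by_cases h : y = x <;> simp [subst, h, udepth, ih]

theorem substT_inl_eq_inr_iff {x y : ℕ} {u : ℕ ⊕ Cst} {c : Cst} :
    substT x (Sum.inl y : ℕ ⊕ Cst) u = Sum.inr c ↔ u = Sum.inr c := by
  cases u with
  | inl z => simp only [substT]; split <;> simp
  | inr d => simp [substT]

theorem substT_inr_eq_inl_iff {x z : ℕ} {u : ℕ ⊕ Cst} {c : Cst} :
    substT x (Sum.inr c : ℕ ⊕ Cst) u = Sum.inl z ↔ u = Sum.inl z ∧ z ≠ x := by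
  cases u with
  | inl w =>
      simp only [substT]
      split
      · rename_i h; subst h
        constructor
        · intro h; exact absurd h (by simp)
        · rintro ⟨h1, h2⟩; exact absurd (Sum.inl.inj h1.symm) h2
      · rename_i h
        constructor
        · intro he; obtain rfl := Sum.inl.inj he; exact ⟨rfl, fun hz => h hz⟩
        · rintro ⟨h1, _⟩; exact h1
  | inr d => simp [substT]

theorem fv_subst_inr (φ : Fml Cst Rl ar) (x : ℕ) (c : Cst) :
    (φ.subst x (.inr c)).fv = φ.fv \ {x} := by
  induction φ with
  | top => simp [subst, fv]
  | rel S ts =>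
      ext z
      simp only [subst, fv, Set.mem_setOf_eq, Set.mem_diff, Set.mem_singleton_iff]
      constructor
      · rintro ⟨i, hi⟩
        rw [substT_inr_eq_inl_iff] at hi
        exact ⟨⟨i, hi.1⟩, hi.2⟩
      · rintro ⟨⟨i, hi⟩, hz⟩
        exact ⟨i, substT_inr_eq_inl_iff.2 ⟨hi, hz⟩⟩
  | and φ ψ ihφ ihψ => simp only [subst, fv, ihφ, ihψ, Set.union_diff_distrib]
  | dia φ ih => simpa [subst, fv] using ih
  | all y φ ih =>
      by_cases h : y = x
      · subst h
        simp only [subst, if_pos rfl, ↓reduceIte, fv]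
        rw [Set.diff_diff, Set.union_self]
      · simp only [subst, if_neg h, fv, ih]
        rw [Set.diff_diff_comm]

theorem fv_subst_inl (φ : Fml Cst Rl ar) (x y : ℕ) :
    (φ.subst x (.inl y)).fv ⊆ (φ.fv \ {x}) ∪ {y} := by
  induction φ with
  | top => simp [subst, fv]
  | rel S ts =>
      rintro z ⟨i, hi⟩
      replace hi : substT x (Sum.inl y : ℕ ⊕ Cst) (ts i) = Sum.inl z := hi
      cases hts : ts i with
      | inl w =>
          rw [hts] at hi
          simp only [substT] at hi
          split at hi
          · obtain rfl := Sum.inl.inj hi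
            exact Or.inr rfl
          · obtain rfl := Sum.inl.inj hi
            exact Or.inl ⟨⟨i, hts⟩, by rename_i h; simpa using h⟩
      | inr d => rw [hts] at hi; exact absurd hi (by simp [substT])
  | and φ ψ ihφ ihψ =>
      rintro z (hz | hz)
      · rcases ihφ hz with h | h
        · exact Or.inl ⟨Or.inl h.1, h.2⟩
        · exact Or.inr h
      · rcases ihψ hz with h | h
        · exact Or.inl ⟨Or.inr h.1, h.2⟩
        · exact Or.inr h
  | dia φ ih => exact ih
  | all w φ ih =>
      by_cases h : w = x
      · subst h
        simp only [subst, if_pos rfl, fv]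
        rintro z ⟨hz, hzw⟩
        exact Or.inl ⟨⟨hz, hzw⟩, fun hx => hzw (Set.mem_singleton_iff.mp hx ▸ rfl)⟩
      · simp only [subst, if_neg h, fv]
        rintro z ⟨hz, hzw⟩
        rcases ih hz with h' | h'
        · exact Or.inl ⟨⟨h'.1, hzw⟩, h'.2⟩
        · exact Or.inr h'

theorem consts_subst_inl (φ : Fml Cst Rl ar) (x y : ℕ) :
    (φ.subst x (.inl y)).consts = φ.consts := by
  induction φ with
  | top => rfl
  | rel S ts =>
      ext c
      simp only [subst, consts, Set.mem_setOf_eq]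
      constructor
      · rintro ⟨i, hi⟩; exact ⟨i, substT_inl_eq_inr_iff.mp hi⟩
      · rintro ⟨i, hi⟩; exact ⟨i, substT_inl_eq_inr_iff.mpr hi⟩
  | and φ ψ ihφ ihψ => simp [subst, consts, ihφ, ihψ]
  | dia φ ih => simpa [subst, consts] using ih
  | all w φ ih => by_cases h : w = x <;> simp [subst, h, consts, ih]

theorem consts_subst_inr (φ : Fml Cst Rl ar) (x : ℕ) (c : Cst) :
    (φ.subst x (.inr c)).consts ⊆ φ.consts ∪ {c} := by
  induction φ with
  | top => simp [subst, consts]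
  | rel S ts =>
      rintro d ⟨i, hi⟩
      replace hi : substT x (Sum.inr c : ℕ ⊕ Cst) (ts i) = Sum.inr d := hi
      cases hts : ts i with
      | inl w =>
          rw [hts] at hi
          simp only [substT] at hi
          split at hi
          · obtain rfl := Sum.inr.inj hi; exact Or.inr rfl
          · exact absurd hi (by simp)
      | inr e =>
          rw [hts] at hi
          obtain rfl := Sum.inr.inj hi
          exact Or.inl ⟨i, hts⟩
  | and φ ψ ihφ ihψ =>
      rintro d (hd | hd)
      · rcases ihφ hd with h | h
        · exact Or.inl (Or.inl h)
        · exact Or.inr h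
      · rcases ihψ hd with h | h
        · exact Or.inl (Or.inr h)
        · exact Or.inr h
  | dia φ ih => exact ih
  | all w φ ih =>
      by_cases h : w = x
      · subst h
        simp only [subst, if_pos rfl, consts]
        exact Set.subset_union_left
      · simpa [subst, if_neg h, consts] using ih

def varsAll : Fml Cst Rl ar → Set ℕ
  | .top => ∅
  | .rel _ ts => {x | ∃ i, ts i = Sum.inl x}
  | .and φ ψ => varsAll φ ∪ varsAll ψ
  | .dia φ => varsAll φ
  | .all y φ => varsAll φ ∪ {y}

theorem fv_subset_varsAll (φ : Fml Cst Rl ar) : φ.fv ⊆ φ.varsAll := by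
  induction φ with
  | top => exact subset_rfl
  | rel S ts => exact subset_rfl
  | and φ ψ ihφ ihψ => exact Set.union_subset_union ihφ ihψ
  | dia φ ih => exact ih
  | all y φ ih => intro a ha; exact Set.mem_union_left _ (ih ha.1)

theorem varsAll_finite (φ : Fml Cst Rl ar) : φ.varsAll.Finite := by
  induction φ with
  | top => exact Set.finite_empty
  | rel S ts =>
      have hsub : varsAll (Fml.rel (ar := ar) S ts) ⊆ ⋃ i, {x | ts i = Sum.inl x} := by
        rintro x ⟨i, hi⟩
        exact Set.mem_iUnion.2 ⟨i, hi⟩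
      refine Set.Finite.subset (Set.finite_iUnion fun i => ?_) hsub
      refine Set.Subsingleton.finite ?_
      intro a ha b hb
      exact Sum.inl.inj (ha.symm.trans hb)
  | and φ ψ ihφ ihψ => exact ihφ.union ihψ
  | dia φ ih => exact ih
  | all y φ ih => exact ih.union (Set.finite_singleton y)

theorem subst_id (φ : Fml Cst Rl ar) (x : ℕ) : φ.subst x (.inl x) = φ := by
  induction φ with
  | top => rfl
  | rel S ts =>
      have : (fun i => substT x (Sum.inl x : ℕ ⊕ Cst) (ts i)) = ts := by
        funext i
        cases ts i with
        | inl z =>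
            simp only [substT]
            split
            · rename_i h; rw [h]
            · rfl
        | inr c => rfl
      simp only [subst, this]
  | and φ ψ ihφ ihψ => simp only [subst, ihφ, ihψ]
  | dia φ ih => simp only [subst, ih]
  | all y φ ih => by_cases h : y = x <;> simp [subst, h, ih]

theorem subst_subst_fresh (φ : Fml Cst Rl ar) (x y : ℕ) (t : ℕ ⊕ Cst)
    (hy : y ∉ φ.varsAll) : (φ.subst x (.inl y)).subst y t = φ.subst x t := by
  induction φ generalizing x t with
  | top => rfl
  | rel S ts =>
      simp only [subst]
      congr 1
      funext i
      cases hts : ts i with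
      | inl z =>
          by_cases hzx : z = x
          · subst hzx
            simp [substT]
          · have hzy : z ≠ y := fun he => hy (he ▸ ⟨i, hts⟩)
            simp [substT, hzx, hzy]
      | inr c => simp [substT]
  | and φ ψ ihφ ihψ =>
      have h1 : y ∉ φ.varsAll := fun h => hy (Or.inl h)
      have h2 : y ∉ ψ.varsAll := fun h => hy (Or.inr h)
      simp only [subst, ihφ _ _ h1, ihψ _ _ h2]
  | dia φ ih => simp only [subst, ih _ _ hy]
  | all z φ ih =>
      have hyv : y ∉ φ.varsAll := fun h => hy (Or.inl h)
      have hyz : z ≠ y := fun he => hy (Or.inr (he ▸ rfl))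
      by_cases hzx : z = x
      · subst hzx
        rw [show (Fml.all z φ).subst z (Sum.inl y) = Fml.all z φ by simp [subst]]
        rw [show (Fml.all z φ).subst z t = Fml.all z φ by simp [subst]]
        exact subst_eq_of_not_fv _ _ _ (fun h => hyv (fv_subset_varsAll φ h.1))
      · simp only [subst, if_neg hzx, if_neg hyz]
        rw [ih _ _ hyv]

theorem freeFor_inr (c : Cst) (x : ℕ) (φ : Fml Cst Rl ar) :
    FreeFor (.inr c) x φ := by
  induction φ with
  | top => trivial
  | rel S ts => trivial
  | and φ ψ ihφ ihψ => exact ⟨ihφ, ihψ⟩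
  | dia φ ih => exact ih
  | all y φ ih => exact Or.inr ⟨by simp, ih⟩

theorem freeFor_inl_subst (φ : Fml Cst Rl ar) (x y : ℕ) (hy : y ∉ φ.varsAll) :
    FreeFor (Sum.inl x) y (φ.subst x (.inl y)) := by
  induction φ with
  | top => trivial
  | rel S ts => trivial
  | and φ ψ ihφ ihψ =>
      exact ⟨ihφ fun h => hy (Or.inl h), ihψ fun h => hy (Or.inr h)⟩
  | dia φ ih => exact ih fun h => hy h
  | all z φ ih =>
      have hyv : y ∉ φ.varsAll := fun h => hy (Or.inl h)
      by_cases hzx : z = x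
      · subst hzx
        simp only [subst, if_pos rfl]
        exact Or.inl fun h => hy (Or.inl (fv_subset_varsAll φ h.1))
      · simp only [subst, if_neg hzx]
        exact Or.inr ⟨fun he => hzx (Sum.inl.inj he).symm, ih hyv⟩

theorem self_mem_cl (C : Set Cst) (γ : Fml Cst Rl ar) : γ ∈ γ.cl C := by
  cases γ <;> simp [cl]

theorem cl_trans_aux {C : Set Cst} : ∀ (n : ℕ) (γ : Fml Cst Rl ar), γ.size ≤ n →
    ∀ ψ ∈ γ.cl C, ψ.cl C ⊆ γ.cl C := by
  intro n
  induction n with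
  | zero => intro γ h; cases γ <;> simp [size] at h
  | succ n ih =>
    intro γ hs ψ hψ
    cases γ with
    | top =>
        simp only [cl, Set.mem_singleton_iff] at hψ
        subst hψ
        exact subset_rfl
    | rel S ts =>
        simp only [cl, Set.mem_insert_iff, Set.mem_singleton_iff] at hψ
        rcases hψ with rfl | rfl
        · exact subset_rfl
        · intro ξ hξ
          simp only [cl, Set.mem_singleton_iff] at hξ
          simp [cl, hξ]
    | and φ χ =>
        have hsφ : φ.size ≤ n := by simp [size] at hs; omega
        have hsχ : χ.size ≤ n := by simp [size] at hs; omega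
        simp only [cl, Set.mem_union, Set.mem_singleton_iff] at hψ
        rcases hψ with (rfl | h) | h
        · exact subset_rfl
        · exact (ih φ hsφ ψ h).trans (fun ξ hξ => by
            simp only [cl, Set.mem_union]; exact Or.inl (Or.inr hξ))
        · exact (ih χ hsχ ψ h).trans (fun ξ hξ => by
            simp only [cl, Set.mem_union]; exact Or.inr hξ)
    | dia φ =>
        have hsφ : φ.size ≤ n := by simp [size] at hs; omega
        simp only [cl, Set.mem_union, Set.mem_singleton_iff] at hψ
        rcases hψ with rfl | h
        · exact subset_rfl
        · exact (ih φ hsφ ψ h).trans (fun ξ hξ => by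
            simp only [cl, Set.mem_union]; exact Or.inr hξ)
    | all x φ =>
        have hsφ : ∀ c : Cst, (φ.subst x (.inr c)).size ≤ n := by
          intro c; rw [size_subst]; simp [size] at hs; omega
        simp only [cl, Set.mem_union, Set.mem_singleton_iff, Set.mem_iUnion] at hψ
        rcases hψ with rfl | ⟨c, hc, h⟩
        · exact subset_rfl
        · exact (ih _ (hsφ c) ψ h).trans (fun ξ hξ => by
            simp only [cl, Set.mem_union, Set.mem_iUnion]
            exact Or.inr ⟨c, hc, hξ⟩)

theorem cl_mono_of_mem {C : Set Cst} {γ ψ : Fml Cst Rl ar} (h : ψ ∈ γ.cl C) :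
    ψ.cl C ⊆ γ.cl C :=
  cl_trans_aux γ.size γ le_rfl ψ h

theorem fv_of_mem_cl {C : Set Cst} : ∀ (n : ℕ) (γ : Fml Cst Rl ar), γ.size ≤ n →
    ∀ ψ ∈ γ.cl C, ψ.fv ⊆ γ.fv := by
  intro n
  induction n with
  | zero => intro γ h; cases γ <;> simp [size] at h
  | succ n ih =>
    intro γ hs ψ hψ
    cases γ with
    | top =>
        simp only [cl, Set.mem_singleton_iff] at hψ
        subst hψ
        exact subset_rfl
    | rel S ts =>
        simp only [cl, Set.mem_insert_iff, Set.mem_singleton_iff] at hψ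
        rcases hψ with rfl | rfl
        · exact subset_rfl
        · intro ξ hξ; exact absurd hξ (by simp [fv])
    | and φ χ =>
        have hsφ : φ.size ≤ n := by simp [size] at hs; omega
        have hsχ : χ.size ≤ n := by simp [size] at hs; omega
        simp only [cl, Set.mem_union, Set.mem_singleton_iff] at hψ
        rcases hψ with (rfl | h) | h
        · exact subset_rfl
        · exact (ih φ hsφ ψ h).trans (fun ξ hξ => Or.inl hξ)
        · exact (ih χ hsχ ψ h).trans (fun ξ hξ => Or.inr hξ)
    | dia φ =>
        have hsφ : φ.size ≤ n := by simp [size] at hs; omega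
        simp only [cl, Set.mem_union, Set.mem_singleton_iff] at hψ
        rcases hψ with rfl | h
        · exact subset_rfl
        · exact ih φ hsφ ψ h
    | all x φ =>
        simp only [cl, Set.mem_union, Set.mem_singleton_iff, Set.mem_iUnion] at hψ
        rcases hψ with rfl | ⟨c, hc, h⟩
        · exact subset_rfl
        · have hsφ : (φ.subst x (.inr c)).size ≤ n := by
            rw [size_subst]; simp [size] at hs; omega
          have := ih _ hsφ ψ h
          rw [fv_subst_inr] at this
          exact this

theorem cdepth_of_mem_cl [Finite Cst] {C : Set Cst} :
    ∀ (n : ℕ) (γ : Fml Cst Rl ar), γ.size ≤ n →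
    ∀ ψ ∈ γ.cl C, ψ.consts.ncard ≤ γ.consts.ncard + γ.udepth := by
  intro n
  induction n with
  | zero => intro γ h; cases γ <;> simp [size] at h
  | succ n ih =>
    intro γ hs ψ hψ
    cases γ with
    | top =>
        simp only [cl, Set.mem_singleton_iff] at hψ
        subst hψ
        exact Nat.le_add_right _ _
    | rel S ts =>
        simp only [cl, Set.mem_insert_iff, Set.mem_singleton_iff] at hψ
        rcases hψ with rfl | rfl
        · exact Nat.le_add_right _ _
        · simp [consts]
    | and φ χ =>
        have hsφ : φ.size ≤ n := by simp [size] at hs; omega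
        have hsχ : χ.size ≤ n := by simp [size] at hs; omega
        simp only [cl, Set.mem_union, Set.mem_singleton_iff] at hψ
        have hφle : φ.consts.ncard ≤ (Fml.and φ χ).consts.ncard :=
          Set.ncard_le_ncard Set.subset_union_left (Set.toFinite _)
        have hχle : χ.consts.ncard ≤ (Fml.and φ χ).consts.ncard :=
          Set.ncard_le_ncard Set.subset_union_right (Set.toFinite _)
        rcases hψ with (rfl | h) | h
        · exact Nat.le_add_right _ _
        · have := ih φ hsφ ψ h
          have hu : φ.udepth ≤ (Fml.and φ χ).udepth := le_max_left _ _
          omega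
        · have := ih χ hsχ ψ h
          have hu : χ.udepth ≤ (Fml.and φ χ).udepth := le_max_right _ _
          omega
    | dia φ =>
        have hsφ : φ.size ≤ n := by simp [size] at hs; omega
        simp only [cl, Set.mem_union, Set.mem_singleton_iff] at hψ
        rcases hψ with rfl | h
        · exact Nat.le_add_right _ _
        · exact ih φ hsφ ψ h
    | all x φ =>
        simp only [cl, Set.mem_union, Set.mem_singleton_iff, Set.mem_iUnion] at hψ
        rcases hψ with rfl | ⟨c, hc, h⟩
        · exact Nat.le_add_right _ _
        · have hsφ : (φ.subst x (.inr c)).size ≤ n := by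
            rw [size_subst]; simp [size] at hs; omega
          have h1 := ih _ hsφ ψ h
          have h2 : (φ.subst x (.inr c)).consts.ncard ≤ φ.consts.ncard + 1 := by
            calc (φ.subst x (.inr c)).consts.ncard
                ≤ (φ.consts ∪ {c}).ncard :=
                  Set.ncard_le_ncard (consts_subst_inr φ x c) (Set.toFinite _)
              _ ≤ φ.consts.ncard + ({c} : Set Cst).ncard := Set.ncard_union_le _ _
              _ = φ.consts.ncard + 1 := by rw [Set.ncard_singleton]
          have h3 : (φ.subst x (.inr c)).udepth = φ.udepth := udepth_subst _ _ _
          show ψ.consts.ncard ≤ φ.consts.ncard + (φ.udepth + 1)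
          omega

end Fml

theorem der_conj_of_mem : ∀ (L : List (Fml Cst Rl ar)) {χ}, χ ∈ L → Der (conjList L) χ
  | a :: L, χ, h => by
      rcases List.mem_cons.mp h with rfl | h
      · exact Der.andE1 _ _
      · exact Der.cut (Der.andE2 _ _) (der_conj_of_mem L h)

theorem der_conj_all {φ : Fml Cst Rl ar} :
    ∀ (L : List (Fml Cst Rl ar)), (∀ χ ∈ L, Der φ χ) → Der φ (conjList L)
  | [], _ => Der.top φ
  | a :: L, h =>
      Der.andI (h a List.mem_cons_self)
        (der_conj_all L fun χ hχ => h χ (List.mem_cons_of_mem a hχ))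

theorem der_mdepth_le {φ ψ : Fml Cst Rl ar} (h : Der φ ψ) : ψ.mdepth ≤ φ.mdepth := by
  induction h with
  | top => exact Nat.zero_le _
  | refl => exact le_rfl
  | andE1 φ ψ => exact le_max_left _ _
  | andE2 φ ψ => exact le_max_right _ _
  | andI _ _ ih1 ih2 => exact max_le ih1 ih2
  | cut _ _ ih1 ih2 => exact ih2.trans ih1
  | diaMono _ ih => exact Nat.succ_le_succ ih
  | diaTrans φ => exact Nat.le_succ _
  | allI x _ _ ih => exact ih
  | allE x t _ _ ih => rw [Fml.mdepth_subst] at ih; exact ih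
  | inst x t _ _ _ ih =>
      show (Fml.mdepth _) ≤ (Fml.mdepth _)
      rw [Fml.mdepth_subst, Fml.mdepth_subst]; exact ih
  | genC x c _ _ _ ih => rw [Fml.mdepth_subst, Fml.mdepth_subst] at ih; exact ih

end LindenbaumLemmas

theorem lindenbaum (Cst Rl : Type) (ar : Rl → ℕ) [Finite Cst] [Finite Rl]
    (Φ : Set (Fml Cst Rl ar)) (hΦfin : Φ.Finite) (hΦcl : ∀ φ ∈ Φ, φ.Closed)
    (hcard : 2 * cdepthSet Φ + 2 * udepthSet Φ < Nat.card Cst)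
    (p : Pair Cst Rl ar) (hsub : p.pos ∪ p.neg ⊆ clSet Set.univ Φ)
    (hclosed : p.ClosedP) (hcons : p.Consistent)
    (hsing : ∃ φ₀ : Fml Cst Rl ar, p.pos = {φ₀}) :
    ∃ q : Pair Cst Rl ar, p.pos ⊆ q.pos ∧ p.neg ⊆ q.neg ∧
      q.MCW (clSet Set.univ Φ) ∧ mdepthSet q.pos = mdepthSet p.pos := by
  classical
  obtain ⟨φ₀, hpos⟩ := hsing
  have hφ₀p : φ₀ ∈ p.pos := by rw [hpos]; exact rfl
  have hφ₀Cl : φ₀ ∈ clSet Set.univ Φ := hsub (Or.inl hφ₀p)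
  have hClmem : ∀ {ψ : Fml Cst Rl ar}, ψ ∈ clSet Set.univ Φ →
      ∃ γ ∈ Φ, ψ ∈ γ.cl Set.univ := by
    intro ψ hψ
    simpa [clSet, Set.mem_iUnion] using hψ
  have hClClosed : ∀ ψ ∈ clSet Set.univ Φ, ψ.Closed := by
    intro ψ hψ
    obtain ⟨γ, hγ, hm⟩ := hClmem hψ
    have h1 : ψ.fv ⊆ γ.fv := Fml.fv_of_mem_cl γ.size γ le_rfl ψ hm
    have h2 : γ.fv = ∅ := hΦcl γ hγ
    exact Set.eq_empty_of_subset_empty (h2 ▸ h1)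
  have hcd : ∀ ψ ∈ clSet Set.univ Φ, ψ.consts.ncard ≤ cdepthSet Φ + udepthSet Φ := by
    intro ψ hψ
    obtain ⟨γ, hγ, hm⟩ := hClmem hψ
    have h1 := Fml.cdepth_of_mem_cl γ.size γ le_rfl ψ hm
    have h2 : Fml.cdepth γ ≤ cdepthSet Φ :=
      le_csSup ((hΦfin.image _).bddAbove) (Set.mem_image_of_mem _ hγ)
    have h2' : γ.consts.ncard ≤ cdepthSet Φ := h2
    have h3 : γ.udepth ≤ udepthSet Φ :=
      le_csSup ((hΦfin.image _).bddAbove) (Set.mem_image_of_mem _ hγ)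
    omega
  refine ⟨⟨{ψ | ψ ∈ clSet Set.univ Φ ∧ Der φ₀ ψ}, {ψ | ψ ∈ clSet Set.univ Φ ∧ ¬ Der φ₀ ψ}⟩,
    ?_, ?_, ⟨?_, ⟨?_, ?_⟩, ?_, ?_⟩, ?_⟩
  · -- p.pos ⊆ q.pos
    intro ψ hψ
    rw [hpos, Set.mem_singleton_iff] at hψ
    subst hψ
    exact ⟨hφ₀Cl, Der.refl ψ⟩
  · -- p.neg ⊆ q.neg
    intro δ hδ
    refine ⟨hsub (Or.inr hδ), ?_⟩
    intro hder
    refine hcons δ hδ [φ₀] ?_ (Der.cut (Der.andE1 φ₀ (conjList [])) hder)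
    intro χ hχ
    rw [List.mem_singleton] at hχ
    subst hχ
    exact hφ₀p
  · -- ClosedP
    rintro ψ (hψ | hψ) <;> exact hClClosed ψ hψ.1
  · -- MaximalIn left
    intro χ hχ
    by_cases h : Der φ₀ χ
    · exact Or.inl ⟨hχ, h⟩
    · exact Or.inr ⟨hχ, h⟩
  · -- MaximalIn right
    rintro ψ (hψ | hψ) <;> exact hψ.1
  · -- Consistent
    intro δ hδ L hL hder
    exact hδ.2 (Der.cut (der_conj_all L fun χ hχ => (hL χ hχ).2) hder)
  · -- FullyWitnessed
    intro x φ hall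
    obtain ⟨hallCl, hnder⟩ := hall
    have hinstCl : ∀ c : Cst, φ.subst x (.inr c) ∈ clSet Set.univ Φ := by
      intro c
      obtain ⟨γ, hγ, hm⟩ := hClmem hallCl
      show φ.subst x (.inr c) ∈ ⋃ γ ∈ Φ, γ.cl Set.univ
      refine Set.mem_biUnion hγ ?_
      apply Fml.cl_mono_of_mem hm
      show φ.subst x (.inr c) ∈ Fml.cl Set.univ (Fml.all x φ)
      have hmem : φ.subst x (.inr c) ∈
          ⋃ d ∈ (Set.univ : Set Cst), (φ.subst x (.inr d)).cl Set.univ :=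
        Set.mem_biUnion (Set.mem_univ c) (Fml.self_mem_cl _ _)
      simp only [Fml.cl]
      exact Set.mem_union_right _ hmem
    by_contra hno
    push_neg at hno
    have hder : ∀ c : Cst, Der φ₀ (φ.subst x (.inr c)) := by
      intro c
      by_contra hD
      exact hno c ⟨hinstCl c, hD⟩
    -- fresh constant
    have hbound : (φ₀.consts ∪ φ.consts).ncard < Nat.card Cst := by
      have b0 : φ₀.consts.ncard ≤ cdepthSet Φ + udepthSet Φ := hcd φ₀ hφ₀Cl
      have b1p : (Fml.all x φ).consts.ncard ≤ cdepthSet Φ + udepthSet Φ := hcd _ hallCl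
      have b1 : φ.consts.ncard ≤ cdepthSet Φ + udepthSet Φ := b1p
      have hu := Set.ncard_union_le φ₀.consts φ.consts
      omega
    have hne : φ₀.consts ∪ φ.consts ≠ Set.univ := by
      intro h
      rw [h, Set.ncard_univ] at hbound
      omega
    obtain ⟨c, hc⟩ := (Set.ne_univ_iff_exists_notMem _).mp hne
    have hcφ₀ : c ∉ φ₀.consts := fun h => hc (Or.inl h)
    have hcφ : c ∉ φ.consts := fun h => hc (Or.inr h)
    -- fresh variable
    have hfin : (φ.varsAll ∪ {x}).Finite :=
      (Fml.varsAll_finite φ).union (Set.finite_singleton x)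
    obtain ⟨y, hy⟩ := hfin.infinite_compl.nonempty
    have hyv : y ∉ φ.varsAll := fun h => hy (Or.inl h)
    -- closedness facts
    have hφ₀closed : φ₀.fv = ∅ := hclosed φ₀ (Or.inl hφ₀p)
    -- the derivation of `all x φ` from `φ₀`
    have e1 : (φ.subst x (.inl y)).subst y (.inr c) = φ.subst x (.inr c) :=
      Fml.subst_subst_fresh φ x y _ hyv
    have e2 : φ₀.subst y (.inr c) = φ₀ :=
      Fml.subst_eq_of_not_fv φ₀ y _ (by rw [hφ₀closed]; exact Set.notMem_empty y)
    have h2 : Der φ₀ (φ.subst x (.inl y)) := by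
      apply Der.genC y c
      · rw [e1, e2]
        exact hder c
      · exact hcφ₀
      · rw [Fml.consts_subst_inl]
        exact hcφ
    have h3 : Der φ₀ (.all y (φ.subst x (.inl y))) :=
      Der.allI y h2 (by rw [hφ₀closed]; exact Set.notMem_empty y)
    have h4 : Der (.all y (φ.subst x (.inl y))) φ := by
      apply Der.allE y (Sum.inl x)
      · rw [Fml.subst_subst_fresh φ x y _ hyv, Fml.subst_id]
        exact Der.refl φ
      · exact Fml.freeFor_inl_subst φ x y hyv
    have h5 : Der (.all y (φ.subst x (.inl y))) (.all x φ) := by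
      apply Der.allI x h4
      intro hx
      rcases Fml.fv_subst_inl φ x y hx.1 with h | h
      · exact h.2 rfl
      · exact hx.2 h
    exact hnder (Der.cut h3 h5)
  · -- mdepth
    have hposmem : φ₀ ∈ {ψ | ψ ∈ clSet Set.univ Φ ∧ Der φ₀ ψ} := ⟨hφ₀Cl, Der.refl φ₀⟩
    have hub : ∀ a ∈ Fml.mdepth '' {ψ | ψ ∈ clSet Set.univ Φ ∧ Der φ₀ ψ},
        a ≤ φ₀.mdepth := by
      rintro a ⟨ψ, hψ, rfl⟩
      exact der_mdepth_le hψ.2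
    have h1 : mdepthSet {ψ | ψ ∈ clSet Set.univ Φ ∧ Der φ₀ ψ} = φ₀.mdepth := by
      apply le_antisymm
      · exact csSup_le ⟨φ₀.mdepth, ⟨φ₀, hposmem, rfl⟩⟩ hub
      · exact le_csSup ⟨φ₀.mdepth, fun a ha => hub a ha⟩ ⟨φ₀, hposmem, rfl⟩
    show mdepthSet _ = mdepthSet p.pos
    rw [hpos, h1]
    simp [mdepthSet]


end QRC1
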